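/- Let ξ be a real random variable with E[ξ] = 0, E[ξ²] = 1, E[|ξ|³] < ∞, and let 0 < μ < σ². For n ≥ 1 define g_n(f) = n·E[ln(1 − f + f·exp((μ − σ²/2)/n + σ·ξ/√n))] for f ∈ [0,1]. Then each g_n attains its maximum over [0,1] at a unique point f_n*, and lim_{n→∞} f_n* = μ/σ² and lim_{n→∞} g_n(f_n*) = μ²/(2σ²). -/

import Mathlib

open MeasureTheory Real Filter Topology Set
set_option maxHeartbeats 1000000

namespace KellyAux

noncomputable def L (f x : ℝ) : ℝ := Real.log (1 - f + f * Real.exp x)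
noncomputable def q (f x : ℝ) : ℝ := f * Real.exp x / (1 - f + f * Real.exp x)

lemma D_pos {f : ℝ} (hf : f ∈ Set.Icc (0:ℝ) 1) (x : ℝ) :
    0 < 1 - f + f * Real.exp x := by
  obtain ⟨h0, h1⟩ := hf
  rcases lt_or_eq_of_le h1 with h | h
  · have : 0 ≤ f * Real.exp x := mul_nonneg h0 (Real.exp_pos x).le
    linarith
  · subst h
    have := Real.exp_pos x
    simpa using this

lemma q_mem {f : ℝ} (hf : f ∈ Set.Icc (0:ℝ) 1) (x : ℝ) :
    q f x ∈ Set.Icc (0:ℝ) 1 := by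
  have hD := D_pos hf x
  constructor
  · exact div_nonneg (mul_nonneg hf.1 (Real.exp_pos x).le) hD.le
  · unfold q; rw [div_le_one hD]; linarith [hf.2]

lemma q_zero (f : ℝ) : q f 0 = f := by simp [q]

lemma hasDerivAt_L {f : ℝ} (hf : f ∈ Set.Icc (0:ℝ) 1) (x : ℝ) :
    HasDerivAt (fun y => L f y) (q f x) x := by
  have hD : HasDerivAt (fun y => 1 - f + f * Real.exp y) (f * Real.exp x) x :=
    ((Real.hasDerivAt_exp x).const_mul f).const_add (1 - f)
  exact hD.log (ne_of_gt (D_pos hf x))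

lemma hasDerivAt_q {f : ℝ} (hf : f ∈ Set.Icc (0:ℝ) 1) (x : ℝ) :
    HasDerivAt (fun y => q f y) (q f x * (1 - q f x)) x := by
  have hD : HasDerivAt (fun y => 1 - f + f * Real.exp y) (f * Real.exp x) x :=
    ((Real.hasDerivAt_exp x).const_mul f).const_add (1 - f)
  have hN : HasDerivAt (fun y => f * Real.exp y) (f * Real.exp x) x :=
    (Real.hasDerivAt_exp x).const_mul f
  have hDne := ne_of_gt (D_pos hf x)
  have h := hN.div hD hDne
  refine h.congr_deriv ?_
  unfold q
  field_simp

lemma hasDerivAt_qq {f : ℝ} (hf : f ∈ Set.Icc (0:ℝ) 1) (x : ℝ) :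
    HasDerivAt (fun y => q f y * (1 - q f y))
      (q f x * (1 - q f x) * (1 - 2 * q f x)) x := by
  have h := (hasDerivAt_q hf x).mul ((hasDerivAt_q hf x).const_sub 1)
  refine h.congr_deriv ?_
  ring

lemma abs_le_abs_of_uIcc {x y : ℝ} (hy : y ∈ Set.uIcc 0 x) : |y| ≤ |x| := by
  rcases le_total 0 x with h | h
  · rw [Set.uIcc_of_le h] at hy
    rw [abs_of_nonneg hy.1, abs_of_nonneg h]; exact hy.2
  · rw [Set.uIcc_of_ge h] at hy
    rw [abs_of_nonpos hy.2, abs_of_nonpos h]; linarith [hy.1]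

lemma mvt {F F' : ℝ → ℝ} (hF : ∀ y, HasDerivAt F (F' y) y) {x C : ℝ}
    (hC : ∀ y ∈ Set.uIcc 0 x, |F' y| ≤ C) : |F x - F 0| ≤ C * |x| := by
  have h := Convex.norm_image_sub_le_of_norm_hasDerivWithin_le
    (f := F) (f' := F') (s := Set.uIcc 0 x)
    (fun y _ => (hF y).hasDerivWithinAt) (fun y hy => hC y hy)
    (convex_uIcc 0 x) (Set.left_mem_uIcc) (Set.right_mem_uIcc)
  simpa using h

lemma qq_bound {f : ℝ} (hf : f ∈ Set.Icc (0:ℝ) 1) (x : ℝ) :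
    |q f x * (1 - q f x) - f * (1 - f)| ≤ |x| / 4 := by
  have h := mvt (F := fun y => q f y * (1 - q f y))
    (F' := fun y => q f y * (1 - q f y) * (1 - 2 * q f y))
    (fun y => hasDerivAt_qq hf y) (x := x) (C := 1/4) ?_
  · have : q f 0 * (1 - q f 0) = f * (1 - f) := by rw [q_zero]
    rw [this] at h; linarith [h]
  · intro y _
    have ht := q_mem hf y
    set t := q f y
    have h1 : (0:ℝ) ≤ t := ht.1
    have h2 : t ≤ 1 := ht.2
    rw [abs_le]
    constructor <;> nlinarith [sq_nonneg (t - 1/2), sq_nonneg t, sq_nonneg (1-t)]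

lemma q_bound {f : ℝ} (hf : f ∈ Set.Icc (0:ℝ) 1) (x : ℝ) :
    |q f x - (f + f * (1 - f) * x)| ≤ x ^ 2 / 4 := by
  have hd : ∀ y : ℝ, HasDerivAt (fun y => q f y - (f + f * (1 - f) * y))
      (q f y * (1 - q f y) - f * (1 - f)) y := by
    intro y
    have h1 : HasDerivAt (fun y : ℝ => f + f * (1 - f) * y) (f * (1 - f)) y := by
      have := ((hasDerivAt_id y).const_mul (f * (1 - f))).const_add f
      simpa using this
    exact (hasDerivAt_q hf y).sub h1
  have h := mvt (fun y => hd y) (x := x) (C := |x| / 4) ?_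
  · have h0 : q f 0 - (f + f * (1 - f) * 0) = 0 := by rw [q_zero]; ring
    rw [h0, sub_zero] at h
    calc |q f x - (f + f * (1 - f) * x)| ≤ |x| / 4 * |x| := h
    _ = x ^ 2 / 4 := by rw [div_mul_eq_mul_div, ← abs_mul, ← pow_two, abs_pow, sq_abs]
  · intro y hy
    calc |q f y * (1 - q f y) - f * (1 - f)| ≤ |y| / 4 := qq_bound hf y
    _ ≤ |x| / 4 := by linarith [abs_le_abs_of_uIcc hy]

lemma L_taylor {f : ℝ} (hf : f ∈ Set.Icc (0:ℝ) 1) (x : ℝ) :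
    |L f x - (f * x + f * (1 - f) * x ^ 2 / 2)| ≤ |x| ^ 3 / 4 := by
  have hd : ∀ y : ℝ, HasDerivAt (fun y => L f y - (f * y + f * (1 - f) * y ^ 2 / 2))
      (q f y - (f + f * (1 - f) * y)) y := by
    intro y
    have h1 : HasDerivAt (fun y : ℝ => y) 1 y := hasDerivAt_id y
    have h2 : HasDerivAt (fun y : ℝ => y ^ 2) (2 * y) y := by
      simpa using hasDerivAt_pow 2 y
    have hp := (h1.const_mul f).add ((h2.const_mul (f * (1 - f))).div_const 2)
    have hp' : HasDerivAt (fun y : ℝ => f * y + f * (1 - f) * y ^ 2 / 2)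
        (f + f * (1 - f) * y) y := by
      refine hp.congr_deriv ?_; ring
    exact (hasDerivAt_L hf y).sub hp'
  have h := mvt (fun y => hd y) (x := x) (C := x ^ 2 / 4) ?_
  · have h0 : L f 0 - (f * 0 + f * (1 - f) * 0 ^ 2 / 2) = 0 := by
      simp [L]
    rw [h0, sub_zero] at h
    calc |L f x - (f * x + f * (1 - f) * x ^ 2 / 2)| ≤ x ^ 2 / 4 * |x| := h
    _ = |x| ^ 3 / 4 := by
        rw [div_mul_eq_mul_div, ← sq_abs, ← pow_succ]
  · intro y hy
    have h1 := q_bound hf y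
    have h2 : y ^ 2 ≤ x ^ 2 := by
      have := abs_le_abs_of_uIcc hy
      nlinarith [abs_nonneg y, sq_abs y, sq_abs x]
    calc |q f y - (f + f * (1 - f) * y)| ≤ y ^ 2 / 4 := h1
    _ ≤ x ^ 2 / 4 := by linarith

lemma L_abs_bound {f : ℝ} (hf : f ∈ Set.Icc (0:ℝ) 1) (x : ℝ) :
    |L f x| ≤ |x| + x ^ 2 / 8 + |x| ^ 3 / 4 := by
  have h := L_taylor hf x
  have h1 : |f * x + f * (1 - f) * x ^ 2 / 2| ≤ |x| + x ^ 2 / 8 := by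
    have hf1 := hf.1; have hf2 := hf.2
    have : |f * x| ≤ |x| := by
      rw [abs_mul, abs_of_nonneg hf1]
      nlinarith [abs_nonneg x]
    have h2 : |f * (1 - f) * x ^ 2 / 2| ≤ x ^ 2 / 8 := by
      rw [abs_div, abs_mul]
      have : |f * (1 - f)| ≤ 1/4 := by rw [abs_of_nonneg (by nlinarith)]; nlinarith [sq_nonneg (f - 1/2)]
      have hx2 : |x ^ 2| = x ^ 2 := abs_of_nonneg (sq_nonneg x)
      rw [hx2]
      have : |f * (1-f)| * x ^ 2 ≤ 1/4 * x ^ 2 := by nlinarith [sq_nonneg x]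
      simp only [abs_of_nonneg (by norm_num : (0:ℝ) ≤ 2)] at *
      linarith
    calc |f * x + f * (1 - f) * x ^ 2 / 2| ≤ |f * x| + |f * (1 - f) * x ^ 2 / 2| := abs_add_le _ _
    _ ≤ |x| + x ^ 2 / 8 := by linarith
  calc |L f x| = |(L f x - (f * x + f * (1 - f) * x ^ 2 / 2)) + (f * x + f * (1 - f) * x ^ 2 / 2)| := by ring_nf
  _ ≤ |L f x - (f * x + f * (1 - f) * x ^ 2 / 2)| + |f * x + f * (1 - f) * x ^ 2 / 2| := abs_add_le _ _
  _ ≤ |x| + x ^ 2 / 8 + |x| ^ 3 / 4 := by linarith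

end KellyAux
namespace KellyAux

variable {Ω : Type*} [MeasurableSpace Ω] {P : Measure Ω} [IsProbabilityMeasure P]
  {ξ : Ω → ℝ}

lemma abs_le_one_add_abs_cube (t : ℝ) : |t| ≤ 1 + |t| ^ 3 := by
  rcases le_total (|t|) 1 with h | h
  · have := abs_nonneg t
    nlinarith [pow_nonneg (abs_nonneg t) 3]
  · have h3 : |t| ^ 1 ≤ |t| ^ 3 := pow_le_pow_right₀ h (by norm_num)
    simpa using by linarith [h3, pow_le_pow_right₀ h (show 1 ≤ 3 by norm_num)]

lemma sq_le_one_add_abs_cube (t : ℝ) : t ^ 2 ≤ 1 + |t| ^ 3 := by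
  rcases le_total (|t|) 1 with h | h
  · nlinarith [abs_nonneg t, sq_abs t]
  · have h3 : |t| ^ 2 ≤ |t| ^ 3 := pow_le_pow_right₀ h (by norm_num)
    nlinarith [sq_abs t]

lemma integrable_xi (hmeas : Measurable ξ)
    (hmom3 : Integrable (fun ω => |ξ ω| ^ 3) P) : Integrable ξ P := by
  refine Integrable.mono ((integrable_const (1:ℝ)).add hmom3)
    hmeas.aestronglyMeasurable (ae_of_all _ fun ω => ?_)
  have h := abs_le_one_add_abs_cube (ξ ω)
  have : (0:ℝ) ≤ 1 + |ξ ω| ^ 3 := by positivity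
  simp only [norm_eq_abs, Pi.add_apply]
  rw [abs_of_nonneg this]
  exact h

lemma integrable_xi_sq (hmeas : Measurable ξ)
    (hmom3 : Integrable (fun ω => |ξ ω| ^ 3) P) :
    Integrable (fun ω => ξ ω ^ 2) P := by
  refine Integrable.mono ((integrable_const (1:ℝ)).add hmom3)
    ((hmeas.pow_const 2).aestronglyMeasurable) (ae_of_all _ fun ω => ?_)
  have h := sq_le_one_add_abs_cube (ξ ω)
  have h2 : (0:ℝ) ≤ 1 + |ξ ω| ^ 3 := by positivity
  simp only [norm_eq_abs, Pi.add_apply]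
  rw [abs_of_nonneg h2, abs_of_nonneg (sq_nonneg _)]
  exact h

lemma cube_add_le (s t : ℝ) (hs : 0 ≤ s) (ht : 0 ≤ t) :
    (s + t) ^ 3 ≤ 4 * (s ^ 3 + t ^ 3) := by
  nlinarith [mul_nonneg (add_nonneg hs ht) (sq_nonneg (s - t)), sq_nonneg (s+t)]

lemma abs_cube_add_le (u v : ℝ) : |u + v| ^ 3 ≤ 4 * |u| ^ 3 + 4 * |v| ^ 3 := by
  have h1 : |u + v| ≤ |u| + |v| := abs_add_le u v
  have h2 : |u + v| ^ 3 ≤ (|u| + |v|) ^ 3 :=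
    pow_le_pow_left₀ (abs_nonneg _) h1 3
  have h3 := cube_add_le |u| |v| (abs_nonneg u) (abs_nonneg v)
  linarith

end KellyAux
namespace KellyAux

variable {Ω : Type*} [MeasurableSpace Ω] {P : Measure Ω} [IsProbabilityMeasure P]
  {ξ : Ω → ℝ} {a b : ℝ}

lemma integrable_affine (hI : Integrable ξ P) (a b : ℝ) :
    Integrable (fun ω => a + b * ξ ω) P :=
  (integrable_const a).add (hI.const_mul b)

lemma integral_affine (hI : Integrable ξ P) (hmean : ∫ ω, ξ ω ∂P = 0) (a b : ℝ) :
    ∫ ω, (a + b * ξ ω) ∂P = a := by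
  rw [integral_add (integrable_const a) (hI.const_mul b), integral_const,
    integral_const_mul, hmean]
  simp

lemma integrable_affine_sq (hI : Integrable ξ P) (hI2 : Integrable (fun ω => ξ ω ^ 2) P)
    (a b : ℝ) : Integrable (fun ω => (a + b * ξ ω) ^ 2) P := by
  have : (fun ω => (a + b * ξ ω) ^ 2)
      = fun ω => a ^ 2 + ((2 * a * b) * ξ ω + b ^ 2 * ξ ω ^ 2) := by
    funext ω; ring
  rw [this]
  exact (integrable_const _).add ((hI.const_mul _).add (hI2.const_mul _))

lemma integral_affine_sq (hI : Integrable ξ P) (hI2 : Integrable (fun ω => ξ ω ^ 2) P)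
    (hmean : ∫ ω, ξ ω ∂P = 0) (hvar : ∫ ω, (ξ ω) ^ 2 ∂P = 1) (a b : ℝ) :
    ∫ ω, (a + b * ξ ω) ^ 2 ∂P = a ^ 2 + b ^ 2 := by
  have h : (fun ω => (a + b * ξ ω) ^ 2)
      = fun ω => a ^ 2 + ((2 * a * b) * ξ ω + b ^ 2 * ξ ω ^ 2) := by
    funext ω; ring
  have h2 : ∫ ω, (2 * a * b * ξ ω + b ^ 2 * ξ ω ^ 2) ∂P = b ^ 2 := by
    rw [integral_add (hI.const_mul _) (hI2.const_mul _), integral_const_mul,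
      integral_const_mul, hmean, hvar]
    ring
  have hg : Integrable (fun ω => 2 * a * b * ξ ω + b ^ 2 * ξ ω ^ 2) P :=
    (hI.const_mul _).add (hI2.const_mul _)
  rw [h, integral_add (integrable_const _) hg, integral_const, h2]
  simp

lemma integrable_abs_affine_cube (hmeas : Measurable ξ)
    (hmom3 : Integrable (fun ω => |ξ ω| ^ 3) P) (a b : ℝ) :
    Integrable (fun ω => |a + b * ξ ω| ^ 3) P := by
  have hm : Measurable (fun ω => |a + b * ξ ω| ^ 3) := by fun_prop
  refine Integrable.mono ((integrable_const (4 * |a| ^ 3)).add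
      ((hmom3.const_mul (4 * |b| ^ 3)))) hm.aestronglyMeasurable
    (ae_of_all _ fun ω => ?_)
  simp only [norm_eq_abs, Pi.add_apply]
  have h1 := abs_cube_add_le a (b * ξ ω)
  have h2 : |b * ξ ω| ^ 3 = |b| ^ 3 * |ξ ω| ^ 3 := by
    rw [abs_mul, mul_pow]
  have h3 : (0:ℝ) ≤ 4 * |a| ^ 3 + 4 * |b| ^ 3 * |ξ ω| ^ 3 := by positivity
  rw [abs_of_nonneg (by positivity), abs_of_nonneg h3]
  nlinarith [h1, h2]

lemma integral_abs_affine_cube_le (hmeas : Measurable ξ)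
    (hmom3 : Integrable (fun ω => |ξ ω| ^ 3) P) (a b : ℝ) :
    ∫ ω, |a + b * ξ ω| ^ 3 ∂P
      ≤ 4 * |a| ^ 3 + 4 * |b| ^ 3 * (∫ ω, |ξ ω| ^ 3 ∂P) := by
  have h := integral_mono (integrable_abs_affine_cube hmeas hmom3 a b)
    ((integrable_const (4 * |a| ^ 3)).add (hmom3.const_mul (4 * |b| ^ 3)))
    (fun ω => by
      have h1 := abs_cube_add_le a (b * ξ ω)
      have h2 : |b * ξ ω| ^ 3 = |b| ^ 3 * |ξ ω| ^ 3 := by rw [abs_mul, mul_pow]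
      simp only [Pi.add_apply]
      nlinarith [h1, h2])
  calc ∫ ω, |a + b * ξ ω| ^ 3 ∂P
      ≤ ∫ ω, (4 * |a| ^ 3 + 4 * |b| ^ 3 * |ξ ω| ^ 3) ∂P := h
    _ = 4 * |a| ^ 3 + 4 * |b| ^ 3 * (∫ ω, |ξ ω| ^ 3 ∂P) := by
        rw [integral_add (integrable_const _) (hmom3.const_mul _), integral_const,
          integral_const_mul]
        simp

end KellyAux

namespace KellyAux
lemma continuous_L {f : ℝ} (hf : f ∈ Set.Icc (0:ℝ) 1) : Continuous (L f) := by
  have hin : Continuous fun x : ℝ => 1 - f + f * Real.exp x := by continuity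
  have := Real.continuousOn_log.comp_continuous hin
    (fun x => by simpa using (ne_of_gt (D_pos hf x)))
  exact this

variable {Ω : Type*} [MeasurableSpace Ω] {P : Measure Ω} [IsProbabilityMeasure P]
  {ξ : Ω → ℝ}

lemma integrable_L_affine (hmeas : Measurable ξ)
    (hmom3 : Integrable (fun ω => |ξ ω| ^ 3) P)
    {f : ℝ} (hf : f ∈ Set.Icc (0:ℝ) 1) (a b : ℝ) :
    Integrable (fun ω => L f (a + b * ξ ω)) P := by
  have hIξ := integrable_xi hmeas hmom3
  have hIξ2 := integrable_xi_sq hmeas hmom3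
  have hYm : Measurable fun ω => a + b * ξ ω := by fun_prop
  have hIY := integrable_affine hIξ a b
  have hIY2 := integrable_affine_sq hIξ hIξ2 a b
  have hIY3 := integrable_abs_affine_cube hmeas hmom3 a b
  have hIu : Integrable (fun ω => f * (a + b * ξ ω)
      + f * (1 - f) * (a + b * ξ ω) ^ 2 / 2) P :=
    (hIY.const_mul f).add ((hIY2.const_mul (f * (1 - f))).div_const 2)
  have hLm : AEStronglyMeasurable (fun ω => L f (a + b * ξ ω)) P :=
    ((continuous_L hf).measurable.comp hYm).aestronglyMeasurable
  have hIG : Integrable (fun ω => L f (a + b * ξ ω)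
      - (f * (a + b * ξ ω) + f * (1 - f) * (a + b * ξ ω) ^ 2 / 2)) P := by
    refine Integrable.mono (hIY3.div_const 4) (hLm.sub hIu.1) (ae_of_all _ fun ω => ?_)
    have h := L_taylor hf (a + b * ξ ω)
    simp only [norm_eq_abs]
    rw [abs_of_nonneg (by positivity : (0:ℝ) ≤ |a + b * ξ ω| ^ 3 / 4)]
    exact h
  have heq : (fun ω => L f (a + b * ξ ω))
      = fun ω => (f * (a + b * ξ ω) + f * (1 - f) * (a + b * ξ ω) ^ 2 / 2)
        + (L f (a + b * ξ ω)
          - (f * (a + b * ξ ω) + f * (1 - f) * (a + b * ξ ω) ^ 2 / 2)) := by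
    funext ω; ring
  rw [heq]; exact hIu.add hIG

lemma key_estimate (hmeas : Measurable ξ)
    (hmean : ∫ ω, ξ ω ∂P = 0) (hvar : ∫ ω, (ξ ω) ^ 2 ∂P = 1)
    (hmom3 : Integrable (fun ω => |ξ ω| ^ 3) P)
    {f : ℝ} (hf : f ∈ Set.Icc (0:ℝ) 1) {n : ℕ} (hn : 1 ≤ n) (μ σ : ℝ) :
    |(n : ℝ) * (∫ ω, L f ((μ - σ ^ 2 / 2) / n + σ * ξ ω / Real.sqrt n) ∂P)
       - (μ * f - σ ^ 2 * f ^ 2 / 2)|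
      ≤ (μ - σ ^ 2 / 2) ^ 2 / (8 * n) + |μ - σ ^ 2 / 2| ^ 3 / (n:ℝ) ^ 2
        + |σ| ^ 3 * (∫ ω, |ξ ω| ^ 3 ∂P) / Real.sqrt n := by
  have hIξ := integrable_xi hmeas hmom3
  have hIξ2 := integrable_xi_sq hmeas hmom3
  set M := ∫ ω, |ξ ω| ^ 3 ∂P with hM
  have hM0 : 0 ≤ M := integral_nonneg (fun ω => by positivity)
  set c := μ - σ ^ 2 / 2 with hc
  have hn1 : (1:ℝ) ≤ (n:ℝ) := by exact_mod_cast hn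
  have hnpos : (0:ℝ) < n := by linarith
  have hnne : (n:ℝ) ≠ 0 := ne_of_gt hnpos
  have hspos : 0 < Real.sqrt n := Real.sqrt_pos.2 hnpos
  have hsne : Real.sqrt (n:ℝ) ≠ 0 := ne_of_gt hspos
  have hs2 : Real.sqrt (n:ℝ) ^ 2 = (n:ℝ) := Real.sq_sqrt hnpos.le
  set a := c / (n:ℝ) with ha
  set b := σ / Real.sqrt (n:ℝ) with hb
  have hXeq : ∀ ω : Ω, c / (n:ℝ) + σ * ξ ω / Real.sqrt (n:ℝ) = a + b * ξ ω := by
    intro ω; rw [ha, hb]; ring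
  simp_rw [ha, hXeq]
  have hYm : Measurable fun ω => a + b * ξ ω := by fun_prop
  have hIY := integrable_affine hIξ a b
  have hIY2 := integrable_affine_sq hIξ hIξ2 a b
  have hIY3 := integrable_abs_affine_cube hmeas hmom3 a b
  have hIu : Integrable (fun ω => f * (a + b * ξ ω)
      + f * (1 - f) * (a + b * ξ ω) ^ 2 / 2) P :=
    (hIY.const_mul f).add ((hIY2.const_mul (f * (1 - f))).div_const 2)
  have hLm : AEStronglyMeasurable (fun ω => L f (a + b * ξ ω)) P :=
    ((continuous_L hf).measurable.comp hYm).aestronglyMeasurable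
  have hIG : Integrable (fun ω => L f (a + b * ξ ω)
      - (f * (a + b * ξ ω) + f * (1 - f) * (a + b * ξ ω) ^ 2 / 2)) P := by
    refine Integrable.mono (hIY3.div_const 4) (hLm.sub hIu.1) (ae_of_all _ fun ω => ?_)
    have h := L_taylor hf (a + b * ξ ω)
    simp only [norm_eq_abs]
    rw [abs_of_nonneg (by positivity : (0:ℝ) ≤ |a + b * ξ ω| ^ 3 / 4)]
    exact h
  have hsplit : ∫ ω, L f (a + b * ξ ω) ∂P
      = (∫ ω, (f * (a + b * ξ ω) + f * (1 - f) * (a + b * ξ ω) ^ 2 / 2) ∂P)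
        + ∫ ω, (L f (a + b * ξ ω)
          - (f * (a + b * ξ ω) + f * (1 - f) * (a + b * ξ ω) ^ 2 / 2)) ∂P := by
    rw [← integral_add hIu hIG]
    congr 1; funext ω; ring
  have hu : ∫ ω, (f * (a + b * ξ ω) + f * (1 - f) * (a + b * ξ ω) ^ 2 / 2) ∂P
      = f * a + f * (1 - f) * (a ^ 2 + b ^ 2) / 2 := by
    have h1 : Integrable (fun ω => f * (a + b * ξ ω)) P := hIY.const_mul f
    have h2 : Integrable (fun ω => f * (1 - f) * (a + b * ξ ω) ^ 2 / 2) P :=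
      (hIY2.const_mul (f * (1 - f))).div_const 2
    have h3 : ∫ ω, f * (1 - f) * (a + b * ξ ω) ^ 2 / 2 ∂P
        = f * (1 - f) * (a ^ 2 + b ^ 2) / 2 := by
      rw [integral_div, integral_const_mul, integral_affine_sq hIξ hIξ2 hmean hvar]
    rw [integral_add h1 h2, integral_const_mul, integral_affine hIξ hmean, h3]
  have hGb : |∫ ω, (L f (a + b * ξ ω)
      - (f * (a + b * ξ ω) + f * (1 - f) * (a + b * ξ ω) ^ 2 / 2)) ∂P|
      ≤ |a| ^ 3 + |b| ^ 3 * M := by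
    have h1 : |∫ ω, (L f (a + b * ξ ω)
        - (f * (a + b * ξ ω) + f * (1 - f) * (a + b * ξ ω) ^ 2 / 2)) ∂P|
        ≤ ∫ ω, |L f (a + b * ξ ω)
          - (f * (a + b * ξ ω) + f * (1 - f) * (a + b * ξ ω) ^ 2 / 2)| ∂P := by
      exact norm_integral_le_integral_norm (μ := P)
        (f := fun ω => L f (a + b * ξ ω)
          - (f * (a + b * ξ ω) + f * (1 - f) * (a + b * ξ ω) ^ 2 / 2))
    have h2 : ∫ ω, |L f (a + b * ξ ω)
        - (f * (a + b * ξ ω) + f * (1 - f) * (a + b * ξ ω) ^ 2 / 2)| ∂P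
        ≤ ∫ ω, |a + b * ξ ω| ^ 3 / 4 ∂P :=
      integral_mono hIG.abs (hIY3.div_const 4) (fun ω => L_taylor hf _)
    have h3 : ∫ ω, |a + b * ξ ω| ^ 3 / 4 ∂P = (∫ ω, |a + b * ξ ω| ^ 3 ∂P) / 4 :=
      integral_div 4 _
    have h4 := integral_abs_affine_cube_le hmeas hmom3 a b
    rw [h3] at h2
    linarith
  have key : (n:ℝ) * (∫ ω, L f (a + b * ξ ω) ∂P) - (μ * f - σ ^ 2 * f ^ 2 / 2)
      = f * (1 - f) * c ^ 2 / (2 * n)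
        + (n:ℝ) * ∫ ω, (L f (a + b * ξ ω)
          - (f * (a + b * ξ ω) + f * (1 - f) * (a + b * ξ ω) ^ 2 / 2)) ∂P := by
    rw [hsplit, hu]
    have hb2 : b ^ 2 = σ ^ 2 / (n:ℝ) := by rw [hb, div_pow, hs2]
    generalize (∫ ω, (L f (a + b * ξ ω)
      - (f * (a + b * ξ ω) + f * (1 - f) * (a + b * ξ ω) ^ 2 / 2)) ∂P) = IG
    rw [hb2, ha, hc]
    field_simp
    ring
  rw [key]
  have e1 : |f * (1 - f) * c ^ 2 / (2 * n)| ≤ c ^ 2 / (8 * n) := by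
    have hf1 := hf.1; have hf2 := hf.2
    have hq2 : |f * (1 - f)| ≤ 1 / 4 := by
      rw [abs_of_nonneg (by nlinarith)]
      nlinarith [sq_nonneg (f - 1/2)]
    have hq : |f * (1 - f) * c ^ 2| ≤ c ^ 2 / 4 := by
      rw [abs_mul, abs_of_nonneg (sq_nonneg c)]
      have := mul_le_mul_of_nonneg_right hq2 (sq_nonneg c)
      linarith
    have h2n : (0:ℝ) < 2 * (n:ℝ) := by positivity
    calc |f * (1 - f) * c ^ 2 / (2 * (n:ℝ))|
        = |f * (1 - f) * c ^ 2| / (2 * (n:ℝ)) := by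
          rw [abs_div, abs_of_nonneg h2n.le]
      _ ≤ (c ^ 2 / 4) / (2 * (n:ℝ)) := by gcongr
      _ = c ^ 2 / (8 * (n:ℝ)) := by ring
  have e2 : |(n:ℝ) * ∫ ω, (L f (a + b * ξ ω)
      - (f * (a + b * ξ ω) + f * (1 - f) * (a + b * ξ ω) ^ 2 / 2)) ∂P|
      ≤ |c| ^ 3 / (n:ℝ) ^ 2 + |σ| ^ 3 * M / Real.sqrt n := by
    rw [abs_mul, abs_of_nonneg hnpos.le]
    have h := mul_le_mul_of_nonneg_left hGb hnpos.le
    have ha3 : (n:ℝ) * |a| ^ 3 = |c| ^ 3 / (n:ℝ) ^ 2 := by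
      rw [ha, abs_div, abs_of_nonneg hnpos.le, div_pow]
      field_simp
    have hb3 : (n:ℝ) * (|b| ^ 3 * M) = |σ| ^ 3 * M / Real.sqrt (n:ℝ) := by
      rw [hb, abs_div, abs_of_nonneg hspos.le, div_pow]
      have h3 : Real.sqrt (n:ℝ) ^ 3 = (n:ℝ) * Real.sqrt (n:ℝ) := by
        rw [pow_succ, hs2]
      rw [h3]
      field_simp
    calc (n:ℝ) * |∫ ω, (L f (a + b * ξ ω)
        - (f * (a + b * ξ ω) + f * (1 - f) * (a + b * ξ ω) ^ 2 / 2)) ∂P|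
        ≤ (n:ℝ) * (|a| ^ 3 + |b| ^ 3 * M) := h
      _ = (n:ℝ) * |a| ^ 3 + (n:ℝ) * (|b| ^ 3 * M) := by ring
      _ = |c| ^ 3 / (n:ℝ) ^ 2 + |σ| ^ 3 * M / Real.sqrt (n:ℝ) := by rw [ha3, hb3]
  calc |f * (1 - f) * c ^ 2 / (2 * n)
      + (n:ℝ) * ∫ ω, (L f (a + b * ξ ω)
        - (f * (a + b * ξ ω) + f * (1 - f) * (a + b * ξ ω) ^ 2 / 2)) ∂P|
      ≤ |f * (1 - f) * c ^ 2 / (2 * n)|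
        + |(n:ℝ) * ∫ ω, (L f (a + b * ξ ω)
          - (f * (a + b * ξ ω) + f * (1 - f) * (a + b * ξ ω) ^ 2 / 2)) ∂P| :=
        abs_add_le _ _
    _ ≤ c ^ 2 / (8 * n) + (|c| ^ 3 / (n:ℝ) ^ 2 + |σ| ^ 3 * M / Real.sqrt n) := by
        linarith
    _ = c ^ 2 / (8 * n) + |c| ^ 3 / (n:ℝ) ^ 2 + |σ| ^ 3 * M / Real.sqrt n := by ring
end KellyAux

namespace KellyAux
variable {Ω : Type*} [MeasurableSpace Ω] {P : Measure Ω} [IsProbabilityMeasure P]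
  {ξ : Ω → ℝ}

lemma exists_max (hmeas : Measurable ξ)
    (hmom3 : Integrable (fun ω => |ξ ω| ^ 3) P) (a b : ℝ) :
    ∃ fm ∈ Set.Icc (0:ℝ) 1,
      IsMaxOn (fun f => ∫ ω, L f (a + b * ξ ω) ∂P) (Set.Icc (0:ℝ) 1) fm := by
  have hIξ := integrable_xi hmeas hmom3
  have hIξ2 := integrable_xi_sq hmeas hmom3
  have hYm : Measurable fun ω => a + b * ξ ω := by fun_prop
  have hbound : Integrable (fun ω => |a + b * ξ ω| + (a + b * ξ ω) ^ 2 / 8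
      + |a + b * ξ ω| ^ 3 / 4) P := by
    have h1 : Integrable (fun ω => |a + b * ξ ω|) P := (integrable_affine hIξ a b).abs
    have h2 := (integrable_affine_sq hIξ hIξ2 a b).div_const 8
    have h3 := (integrable_abs_affine_cube hmeas hmom3 a b).div_const 4
    exact (h1.add h2).add h3
  have hcont : Continuous fun f : (Set.Icc (0:ℝ) 1) => ∫ ω, L f.1 (a + b * ξ ω) ∂P := by
    apply continuous_of_dominated (bound := fun ω => |a + b * ξ ω| + (a + b * ξ ω) ^ 2 / 8
      + |a + b * ξ ω| ^ 3 / 4)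
    · intro f
      exact ((continuous_L f.2).measurable.comp hYm).aestronglyMeasurable
    · intro f
      refine ae_of_all _ fun ω => ?_
      simpa [Real.norm_eq_abs] using L_abs_bound f.2 (a + b * ξ ω)
    · exact hbound
    · refine ae_of_all _ fun ω => ?_
      have hin : Continuous fun f : (Set.Icc (0:ℝ) 1) =>
          1 - f.1 + f.1 * Real.exp (a + b * ξ ω) := by
        have h0 : Continuous fun f : (Set.Icc (0:ℝ) 1) => (f.1 : ℝ) :=
          continuous_subtype_val
        continuity
      exact Real.continuousOn_log.comp_continuous hin
        (fun f => by simpa using ne_of_gt (D_pos f.2 (a + b * ξ ω)))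
  have hco : ContinuousOn (fun f => ∫ ω, L f (a + b * ξ ω) ∂P) (Set.Icc (0:ℝ) 1) := by
    rw [continuousOn_iff_continuous_restrict]
    exact hcont
  exact isCompact_Icc.exists_isMaxOn (Set.nonempty_Icc.2 zero_le_one) hco

lemma affine_ne_zero_pos (hmean : ∫ ω, ξ ω ∂P = 0)
    (hvar : ∫ ω, (ξ ω) ^ 2 ∂P = 1) {a b : ℝ} (hb : b ≠ 0) :
    0 < P {ω | a + b * ξ ω ≠ 0} := by
  by_contra h
  push_neg at h
  have h0 : P {ω | a + b * ξ ω ≠ 0} = 0 := le_antisymm (by simpa using h) zero_le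
  have hae : ∀ᵐ ω ∂P, a + b * ξ ω = 0 := by
    rw [ae_iff]
    exact h0
  have hk : ∀ᵐ ω ∂P, ξ ω = -a / b := hae.mono fun ω hω => by
    field_simp
    linarith
  have h1 : (-a / b : ℝ) = 0 := by
    rw [← hmean, integral_congr_ae hk, integral_const]
    simp
  have hk2 : ∀ᵐ ω ∂P, ξ ω ^ 2 = 0 := hk.mono fun ω hω => by
    rw [hω, h1]
    ring
  have h2 : (1 : ℝ) = 0 := by
    rw [← hvar, integral_congr_ae hk2, integral_const]
    simp
  norm_num at h2

lemma strictConcaveOn_integral (hmeas : Measurable ξ)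
    (hmean : ∫ ω, ξ ω ∂P = 0) (hvar : ∫ ω, (ξ ω) ^ 2 ∂P = 1)
    (hmom3 : Integrable (fun ω => |ξ ω| ^ 3) P) {a b : ℝ} (hb : b ≠ 0) :
    StrictConcaveOn ℝ (Set.Icc (0:ℝ) 1)
      (fun f => ∫ ω, L f (a + b * ξ ω) ∂P) := by
  refine ⟨convex_Icc 0 1, ?_⟩
  intro f₁ h₁ f₂ h₂ hne t s ht hs hts
  simp only [smul_eq_mul]
  have h₃ : t * f₁ + s * f₂ ∈ Set.Icc (0:ℝ) 1 := by
    constructor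
    · have := mul_nonneg ht.le h₁.1; have := mul_nonneg hs.le h₂.1; linarith
    · have := mul_le_mul_of_nonneg_left h₁.2 ht.le
      have := mul_le_mul_of_nonneg_left h₂.2 hs.le
      nlinarith
  have hpt : ∀ x : ℝ, t * L f₁ x + s * L f₂ x ≤ L (t * f₁ + s * f₂) x := by
    intro x
    have hcc := strictConcaveOn_log_Ioi.concaveOn.2 (D_pos h₁ x) (D_pos h₂ x)
      ht.le hs.le hts
    have harg : t * (1 - f₁ + f₁ * Real.exp x) + s * (1 - f₂ + f₂ * Real.exp x)
        = 1 - (t * f₁ + s * f₂) + (t * f₁ + s * f₂) * Real.exp x := by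
      linear_combination hts
    simp only [smul_eq_mul, harg] at hcc
    simpa [L] using hcc
  have hpts : ∀ x : ℝ, x ≠ 0 → t * L f₁ x + s * L f₂ x < L (t * f₁ + s * f₂) x := by
    intro x hx
    have hexp : Real.exp x ≠ 1 := by
      intro h
      exact hx (by rwa [← Real.exp_zero, Real.exp_injective.eq_iff] at h)
    have hDne : (1 - f₁ + f₁ * Real.exp x) ≠ (1 - f₂ + f₂ * Real.exp x) := by
      intro h
      have h5 : (f₁ - f₂) * (Real.exp x - 1) = 0 := by linear_combination h
      rcases mul_eq_zero.1 h5 with h' | h'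
      · exact hne (by linarith)
      · exact hexp (by linarith)
    have hcc := strictConcaveOn_log_Ioi.2 (D_pos h₁ x) (D_pos h₂ x) hDne ht hs hts
    have harg : t * (1 - f₁ + f₁ * Real.exp x) + s * (1 - f₂ + f₂ * Real.exp x)
        = 1 - (t * f₁ + s * f₂) + (t * f₁ + s * f₂) * Real.exp x := by
      linear_combination hts
    simp only [smul_eq_mul, harg] at hcc
    simpa [L] using hcc
  have hI1 := integrable_L_affine hmeas hmom3 h₁ a b
  have hI2 := integrable_L_affine hmeas hmom3 h₂ a b
  have hI3 := integrable_L_affine hmeas hmom3 h₃ a b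
  have hIW : Integrable (fun ω => L (t * f₁ + s * f₂) (a + b * ξ ω)
      - (t * L f₁ (a + b * ξ ω) + s * L f₂ (a + b * ξ ω))) P :=
    hI3.sub ((hI1.const_mul t).add (hI2.const_mul s))
  have hpos : 0 < ∫ ω, (L (t * f₁ + s * f₂) (a + b * ξ ω)
      - (t * L f₁ (a + b * ξ ω) + s * L f₂ (a + b * ξ ω))) ∂P := by
    rw [integral_pos_iff_support_of_nonneg_ae
      (ae_of_all _ fun ω => sub_nonneg.2 (hpt _)) hIW]
    have hsub : {ω | a + b * ξ ω ≠ 0} ⊆ Function.support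
        (fun ω => L (t * f₁ + s * f₂) (a + b * ξ ω)
          - (t * L f₁ (a + b * ξ ω) + s * L f₂ (a + b * ξ ω))) := by
      intro ω hω
      exact ne_of_gt (sub_pos.2 (hpts _ hω))
    exact lt_of_lt_of_le (affine_ne_zero_pos hmean hvar hb) (measure_mono hsub)
  have hfin : ∫ ω, (L (t * f₁ + s * f₂) (a + b * ξ ω)
      - (t * L f₁ (a + b * ξ ω) + s * L f₂ (a + b * ξ ω))) ∂P
      = (∫ ω, L (t * f₁ + s * f₂) (a + b * ξ ω) ∂P)
        - (t * (∫ ω, L f₁ (a + b * ξ ω) ∂P) + s * ∫ ω, L f₂ (a + b * ξ ω) ∂P) := by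
    have hI12 : Integrable (fun ω => t * L f₁ (a + b * ξ ω)
        + s * L f₂ (a + b * ξ ω)) P := (hI1.const_mul t).add (hI2.const_mul s)
    rw [integral_sub hI3 hI12,
      integral_add (hI1.const_mul t) (hI2.const_mul s), integral_const_mul,
      integral_const_mul]
  rw [hfin] at hpos
  linarith
end KellyAux

namespace KellyAux

lemma tendsto_sqrt_nat : Tendsto (fun n : ℕ => Real.sqrt (n:ℝ)) atTop atTop := by
  have hs : Tendsto Real.sqrt atTop atTop := by
    apply tendsto_atTop_atTop.2
    intro b
    refine ⟨(max b 0) ^ 2, fun a ha => ?_⟩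
    have h0 : 0 ≤ max b 0 := le_max_right _ _
    have h1 := Real.sqrt_le_sqrt ha
    rw [Real.sqrt_sq h0] at h1
    exact le_trans (le_max_left b 0) h1
  exact hs.comp tendsto_natCast_atTop_atTop

lemma tendsto_err (A B C : ℝ) :
    Tendsto (fun n : ℕ => A / (8 * (n:ℝ)) + B / (n:ℝ) ^ 2 + C / Real.sqrt (n:ℝ))
      atTop (𝓝 0) := by
  have l1 : Tendsto (fun n : ℕ => A / (8 * (n:ℝ))) atTop (𝓝 0) := by
    have h := tendsto_const_div_atTop_nhds_zero_nat (A / 8)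
    exact Filter.Tendsto.congr (fun n => by ring) h
  have l2 : Tendsto (fun n : ℕ => B / (n:ℝ) ^ 2) atTop (𝓝 0) := by
    have hp : Tendsto (fun n : ℕ => ((n:ℝ)) ^ 2) atTop atTop :=
      (tendsto_pow_atTop (by norm_num : (2:ℕ) ≠ 0)).comp tendsto_natCast_atTop_atTop
    have h2 := hp.inv_tendsto_atTop.const_mul B
    rw [mul_zero] at h2
    exact Filter.Tendsto.congr (fun n => by
      simp [Pi.inv_apply, div_eq_mul_inv]) h2
  have l3 : Tendsto (fun n : ℕ => C / Real.sqrt (n:ℝ)) atTop (𝓝 0) := by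
    have h2 := tendsto_sqrt_nat.inv_tendsto_atTop.const_mul C
    rw [mul_zero] at h2
    exact Filter.Tendsto.congr (fun n => by
      simp [Pi.inv_apply, div_eq_mul_inv]) h2
  have := (l1.add l2).add l3
  simpa using this

end KellyAux

/-- convergence of the high-frequency Kelly fractions.
With `E[ξ]=0`, `E[ξ²]=1`, `E|ξ|³<∞` and `0 < μ < σ²`, the growth rate at
compounding frequency `n`,
`g_n(f) = n E[log(1 - f + f exp((μ-σ²/2)/n + σξ/√n))]`,
attains its maximum over `[0,1]` at a unique point `f_n*`, and
`f_n* → μ/σ²`, `g_n(f_n*) → μ²/(2σ²)` as `n → ∞`. -/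
theorem geometric_hf_kelly_convergence
    {Ω : Type*} [MeasurableSpace Ω] (P : Measure Ω) [IsProbabilityMeasure P]
    (ξ : Ω → ℝ) (hmeas : Measurable ξ)
    (hmean : ∫ ω, ξ ω ∂P = 0)
    (hvar : ∫ ω, (ξ ω) ^ 2 ∂P = 1)
    (hmom3 : Integrable (fun ω => |ξ ω| ^ 3) P)
    (μ σ : ℝ) (hμ : 0 < μ) (hμσ : μ < σ ^ 2) :
    ∃ fs : ℕ → ℝ,
      (∀ n : ℕ, 1 ≤ n →
        fs n ∈ Set.Icc (0 : ℝ) 1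
        ∧ (∀ f ∈ Set.Icc (0 : ℝ) 1,
            (n : ℝ) * ∫ ω, Real.log (1 - f
                + f * Real.exp ((μ - σ ^ 2 / 2) / n + σ * ξ ω / Real.sqrt n)) ∂P
              ≤ (n : ℝ) * ∫ ω, Real.log (1 - fs n
                + fs n * Real.exp ((μ - σ ^ 2 / 2) / n + σ * ξ ω / Real.sqrt n)) ∂P)
        ∧ (∀ f ∈ Set.Icc (0 : ℝ) 1,
            (∀ f' ∈ Set.Icc (0 : ℝ) 1,
              (n : ℝ) * ∫ ω, Real.log (1 - f'
                  + f' * Real.exp ((μ - σ ^ 2 / 2) / n + σ * ξ ω / Real.sqrt n)) ∂P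
                ≤ (n : ℝ) * ∫ ω, Real.log (1 - f
                  + f * Real.exp ((μ - σ ^ 2 / 2) / n + σ * ξ ω / Real.sqrt n)) ∂P)
            → f = fs n))
      ∧ Tendsto fs atTop (𝓝 (μ / σ ^ 2))
      ∧ Tendsto (fun n : ℕ =>
          (n : ℝ) * ∫ ω, Real.log (1 - fs n
            + fs n * Real.exp ((μ - σ ^ 2 / 2) / n + σ * ξ ω / Real.sqrt n)) ∂P)
          atTop (𝓝 (μ ^ 2 / (2 * σ ^ 2))) := by
  classical
  have hσ2 : (0:ℝ) < σ ^ 2 := lt_trans hμ hμσ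
  have hσ : σ ≠ 0 := fun h => by rw [h] at hσ2; simp at hσ2
  have hnpos : ∀ n : ℕ, 1 ≤ n → (0:ℝ) < (n:ℝ) := fun n hn => by
    have : (1:ℝ) ≤ (n:ℝ) := by exact_mod_cast hn
    linarith
  have hex : ∀ n : ℕ, ∃ fm ∈ Set.Icc (0:ℝ) 1,
      IsMaxOn (fun f => ∫ ω, KellyAux.L f ((μ - σ ^ 2 / 2) / (n:ℝ)
        + σ / Real.sqrt (n:ℝ) * ξ ω) ∂P) (Set.Icc (0:ℝ) 1) fm :=
    fun n => KellyAux.exists_max hmeas hmom3 ((μ - σ ^ 2 / 2) / (n:ℝ)) (σ / Real.sqrt (n:ℝ))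
  choose fs hfs hmax using hex
  have hcongr : ∀ (n : ℕ) (f : ℝ), (∫ ω, KellyAux.L f ((μ - σ ^ 2 / 2) / (n:ℝ) + σ / Real.sqrt (n:ℝ) * ξ ω) ∂P) = (∫ ω, KellyAux.L f ((μ - σ ^ 2 / 2) / (n:ℝ) + σ * ξ ω / Real.sqrt (n:ℝ)) ∂P) := by
    intro n f
    congr 1
    funext ω
    congr 1
    ring
  have hconc : ∀ n : ℕ, 1 ≤ n → StrictConcaveOn ℝ (Set.Icc (0:ℝ) 1)
      (fun f => ∫ ω, KellyAux.L f ((μ - σ ^ 2 / 2) / (n:ℝ)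
        + σ / Real.sqrt (n:ℝ) * ξ ω) ∂P) := by
    intro n hn
    have hb : σ / Real.sqrt (n:ℝ) ≠ 0 :=
      div_ne_zero hσ (ne_of_gt (Real.sqrt_pos.2 (hnpos n hn)))
    exact KellyAux.strictConcaveOn_integral hmeas hmean hvar hmom3 hb
  have hkey : ∀ n : ℕ, 1 ≤ n → ∀ f, f ∈ Set.Icc (0:ℝ) 1 →
      |(n:ℝ) * (∫ ω, KellyAux.L f ((μ - σ ^ 2 / 2) / (n:ℝ) + σ * ξ ω / Real.sqrt (n:ℝ)) ∂P) - (μ * f - σ ^ 2 * f ^ 2 / 2)| ≤ ((μ - σ ^ 2 / 2) ^ 2 / (8 * (n:ℝ)) + |μ - σ ^ 2 / 2| ^ 3 / (n:ℝ) ^ 2 + |σ| ^ 3 * (∫ ω, |ξ ω| ^ 3 ∂P) / Real.sqrt (n:ℝ)) :=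
    fun n hn f hf => KellyAux.key_estimate hmeas hmean hvar hmom3 hf hn μ σ
  have hmaxS : ∀ (n : ℕ), ∀ f ∈ Set.Icc (0:ℝ) 1, (∫ ω, KellyAux.L f ((μ - σ ^ 2 / 2) / (n:ℝ) + σ * ξ ω / Real.sqrt (n:ℝ)) ∂P) ≤ (∫ ω, KellyAux.L (fs n) ((μ - σ ^ 2 / 2) / (n:ℝ) + σ * ξ ω / Real.sqrt (n:ℝ)) ∂P) := by
    intro n f hf
    have h := (isMaxOn_iff.1 (hmax n)) f hf
    rwa [hcongr n f, hcongr n (fs n)] at h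
  have hfstar : μ / σ ^ 2 ∈ Set.Icc (0:ℝ) 1 :=
    ⟨le_of_lt (div_pos hμ hσ2), by rw [div_le_one hσ2]; linarith⟩
  have hgmax : ∀ f : ℝ, μ * f - σ ^ 2 * f ^ 2 / 2 ≤ μ ^ 2 / (2 * σ ^ 2) := by
    intro f
    rw [le_div_iff₀ (by positivity : (0:ℝ) < 2 * σ ^ 2)]
    nlinarith [sq_nonneg (σ ^ 2 * f - μ)]
  have hgstar : μ * (μ / σ ^ 2) - σ ^ 2 * (μ / σ ^ 2) ^ 2 / 2 = μ ^ 2 / (2 * σ ^ 2) := by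
    field_simp
    ring
  have hgap : ∀ f : ℝ, μ ^ 2 / (2 * σ ^ 2) - (μ * f - σ ^ 2 * f ^ 2 / 2)
      = σ ^ 2 / 2 * (f - μ / σ ^ 2) ^ 2 := by
    intro f
    field_simp
    ring
  have hE0 : Tendsto (fun n : ℕ => ((μ - σ ^ 2 / 2) ^ 2 / (8 * (n:ℝ)) + |μ - σ ^ 2 / 2| ^ 3 / (n:ℝ) ^ 2 + |σ| ^ 3 * (∫ ω, |ξ ω| ^ 3 ∂P) / Real.sqrt (n:ℝ))) atTop (𝓝 0) :=
    KellyAux.tendsto_err _ _ _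
  have hlow : ∀ n : ℕ, 1 ≤ n →
      μ ^ 2 / (2 * σ ^ 2) - ((μ - σ ^ 2 / 2) ^ 2 / (8 * (n:ℝ)) + |μ - σ ^ 2 / 2| ^ 3 / (n:ℝ) ^ 2 + |σ| ^ 3 * (∫ ω, |ξ ω| ^ 3 ∂P) / Real.sqrt (n:ℝ)) ≤ (n:ℝ) * (∫ ω, KellyAux.L (fs n) ((μ - σ ^ 2 / 2) / (n:ℝ) + σ * ξ ω / Real.sqrt (n:ℝ)) ∂P) := by
    intro n hn
    have h2 := hkey n hn (μ / σ ^ 2) hfstar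
    have h3 := mul_le_mul_of_nonneg_left (hmaxS n (μ / σ ^ 2) hfstar) (by positivity : (0:ℝ) ≤ (n:ℝ))
    rw [hgstar] at h2
    have := abs_le.1 h2
    linarith
  have hhigh : ∀ n : ℕ, 1 ≤ n →
      (n:ℝ) * (∫ ω, KellyAux.L (fs n) ((μ - σ ^ 2 / 2) / (n:ℝ) + σ * ξ ω / Real.sqrt (n:ℝ)) ∂P) ≤ μ ^ 2 / (2 * σ ^ 2) + ((μ - σ ^ 2 / 2) ^ 2 / (8 * (n:ℝ)) + |μ - σ ^ 2 / 2| ^ 3 / (n:ℝ) ^ 2 + |σ| ^ 3 * (∫ ω, |ξ ω| ^ 3 ∂P) / Real.sqrt (n:ℝ)) := by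
    intro n hn
    have h1 := hkey n hn (fs n) (hfs n)
    have := abs_le.1 h1
    have := hgmax (fs n)
    linarith
  have hmain : ∀ n : ℕ, 1 ≤ n →
      σ ^ 2 / 2 * (fs n - μ / σ ^ 2) ^ 2 ≤ 2 * ((μ - σ ^ 2 / 2) ^ 2 / (8 * (n:ℝ)) + |μ - σ ^ 2 / 2| ^ 3 / (n:ℝ) ^ 2 + |σ| ^ 3 * (∫ ω, |ξ ω| ^ 3 ∂P) / Real.sqrt (n:ℝ)) := by
    intro n hn
    have h1 := hkey n hn (fs n) (hfs n)
    have h2 := hlow n hn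
    have h3 := abs_le.1 h1
    rw [← hgap]
    linarith
  refine ⟨fs, ?_, ?_, ?_⟩
  · intro n hn
    refine ⟨hfs n, ?_, ?_⟩
    · intro f hf
      have h := mul_le_mul_of_nonneg_left (hmaxS n f hf) (by positivity : (0:ℝ) ≤ (n:ℝ))
      exact h
    · intro f hf hprop
      apply (hconc n hn).eq_of_isMaxOn ?_ (hmax n) hf (hfs n)
      rw [isMaxOn_iff]
      intro f' hf'
      have h2 := hprop f' hf'
      have h3 : (n:ℝ) * (∫ ω, KellyAux.L f' ((μ - σ ^ 2 / 2) / (n:ℝ) + σ * ξ ω / Real.sqrt (n:ℝ)) ∂P) ≤ (n:ℝ) * (∫ ω, KellyAux.L f ((μ - σ ^ 2 / 2) / (n:ℝ) + σ * ξ ω / Real.sqrt (n:ℝ)) ∂P) := h2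
      rw [← hcongr n f', ← hcongr n f] at h3
      exact le_of_mul_le_mul_left h3 (hnpos n hn)
  · have hsq0 : Tendsto (fun n : ℕ => (fs n - μ / σ ^ 2) ^ 2) atTop (𝓝 0) := by
      apply tendsto_of_tendsto_of_tendsto_of_le_of_le' tendsto_const_nhds
        (g := fun _ => (0:ℝ))
        (h := fun n : ℕ => 4 / σ ^ 2 * ((μ - σ ^ 2 / 2) ^ 2 / (8 * (n:ℝ)) + |μ - σ ^ 2 / 2| ^ 3 / (n:ℝ) ^ 2 + |σ| ^ 3 * (∫ ω, |ξ ω| ^ 3 ∂P) / Real.sqrt (n:ℝ)))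
      · have h := hE0.const_mul (4 / σ ^ 2)
        rw [mul_zero] at h
        exact h
      · exact Filter.Eventually.of_forall fun n => sq_nonneg _
      · refine Filter.eventually_atTop.2 ⟨1, fun n hn => ?_⟩
        have h := hmain n hn
        calc (fs n - μ / σ ^ 2) ^ 2
            = 2 / σ ^ 2 * (σ ^ 2 / 2 * (fs n - μ / σ ^ 2) ^ 2) := by
              field_simp
          _ ≤ 2 / σ ^ 2 * (2 * ((μ - σ ^ 2 / 2) ^ 2 / (8 * (n:ℝ)) + |μ - σ ^ 2 / 2| ^ 3 / (n:ℝ) ^ 2 + |σ| ^ 3 * (∫ ω, |ξ ω| ^ 3 ∂P) / Real.sqrt (n:ℝ))) := by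
              apply mul_le_mul_of_nonneg_left h (by positivity)
          _ = 4 / σ ^ 2 * ((μ - σ ^ 2 / 2) ^ 2 / (8 * (n:ℝ)) + |μ - σ ^ 2 / 2| ^ 3 / (n:ℝ) ^ 2 + |σ| ^ 3 * (∫ ω, |ξ ω| ^ 3 ∂P) / Real.sqrt (n:ℝ)) := by ring
    have habs : Tendsto (fun n : ℕ => |fs n - μ / σ ^ 2|) atTop (𝓝 0) := by
      have hcont := (Real.continuous_sqrt.tendsto 0).comp hsq0
      simp only [Real.sqrt_zero] at hcont
      exact Filter.Tendsto.congr (fun n => by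
        simp [Function.comp, Real.sqrt_sq_eq_abs]) hcont
    apply tendsto_iff_dist_tendsto_zero.2
    simpa [Real.dist_eq] using habs
  · apply tendsto_of_tendsto_of_tendsto_of_le_of_le'
      (g := fun n : ℕ => μ ^ 2 / (2 * σ ^ 2) - ((μ - σ ^ 2 / 2) ^ 2 / (8 * (n:ℝ)) + |μ - σ ^ 2 / 2| ^ 3 / (n:ℝ) ^ 2 + |σ| ^ 3 * (∫ ω, |ξ ω| ^ 3 ∂P) / Real.sqrt (n:ℝ)))
      (h := fun n : ℕ => μ ^ 2 / (2 * σ ^ 2) + ((μ - σ ^ 2 / 2) ^ 2 / (8 * (n:ℝ)) + |μ - σ ^ 2 / 2| ^ 3 / (n:ℝ) ^ 2 + |σ| ^ 3 * (∫ ω, |ξ ω| ^ 3 ∂P) / Real.sqrt (n:ℝ)))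
    · have h : Tendsto (fun _ : ℕ => μ ^ 2 / (2 * σ ^ 2)) atTop (𝓝 (μ ^ 2 / (2 * σ ^ 2))) :=
        tendsto_const_nhds
      have := h.sub hE0
      simpa using this
    · have h : Tendsto (fun _ : ℕ => μ ^ 2 / (2 * σ ^ 2)) atTop (𝓝 (μ ^ 2 / (2 * σ ^ 2))) :=
        tendsto_const_nhds
      have := h.add hE0
      simpa using this
    · refine Filter.eventually_atTop.2 ⟨1, fun n hn => ?_⟩
      exact hlow n hn
    · refine Filter.eventually_atTop.2 ⟨1, fun n hn => ?_⟩
      exact hhigh n hn
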